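/- Let Φ ∈ Sp(2n,ℝ) and X ∈ sp(2n,ℝ) with isotropic image such that Im(Φ − Id) ∩ Im(X) = 0 and ΦX = X. Then rank(Φ(Id + X) − Id) − rank(Φ − Id) = rank(X). -/

import Mathlib

open LinearMap BilinForm

set_option maxHeartbeats 1600000 in
/-- If `Φ ∈ Sp(2n)` and `X` satisfies `Id + tX ∈ Sp(2n)` for all `t`, with
`ΦX = X` and `Im(Φ - Id) ∩ Im X = 0`, then
`rank(Φ(Id + X) - Id) = rank(Φ - Id) + rank X`. -/
theorem rank_symplectic_perturbation {n : ℕ}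
    (ω₀ : (Fin n ⊕ Fin n → ℝ) → (Fin n ⊕ Fin n → ℝ) → ℝ)
    (hω₀ : ∀ x y, ω₀ x y =
      ∑ j, (x (Sum.inl j) * y (Sum.inr j) - x (Sum.inr j) * y (Sum.inl j)))
    (Φ X : Matrix (Fin n ⊕ Fin n) (Fin n ⊕ Fin n) ℝ)
    (hΦ : ∀ x y, ω₀ (Φ.mulVec x) (Φ.mulVec y) = ω₀ x y)
    (hX : ∀ (t : ℝ) (x y),
      ω₀ ((1 + t • X).mulVec x) ((1 + t • X).mulVec y) = ω₀ x y)
    (hΦX : Φ * X = X)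
    (hinter : LinearMap.range (Φ - 1).mulVecLin ⊓ LinearMap.range X.mulVecLin = ⊥) :
    (Φ * (1 + X) - 1).rank = (Φ - 1).rank + X.rank := by
  classical
  -- the standard symplectic form as a bilinear form
  set B : LinearMap.BilinForm ℝ (Fin n ⊕ Fin n → ℝ) := LinearMap.mk₂ ℝ
    (fun x y => ∑ j, (x (Sum.inl j) * y (Sum.inr j) - x (Sum.inr j) * y (Sum.inl j)))
    (by intro x x' y; rw [← Finset.sum_add_distrib]
        refine Finset.sum_congr rfl fun j _ => ?_
        simp only [Pi.add_apply]; ring)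
    (by intro a x y; rw [Finset.smul_sum]
        refine Finset.sum_congr rfl fun j _ => ?_
        simp only [Pi.smul_apply, smul_eq_mul]; ring)
    (by intro x y y'; rw [← Finset.sum_add_distrib]
        refine Finset.sum_congr rfl fun j _ => ?_
        simp only [Pi.add_apply]; ring)
    (by intro a x y; rw [Finset.smul_sum]
        refine Finset.sum_congr rfl fun j _ => ?_
        simp only [Pi.smul_apply, smul_eq_mul]; ring) with hBdef
  have hBmk : ∀ x y : Fin n ⊕ Fin n → ℝ, B x y
      = ∑ j, (x (Sum.inl j) * y (Sum.inr j) - x (Sum.inr j) * y (Sum.inl j)) :=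
    fun x y => rfl
  have hB : ∀ x y : Fin n ⊕ Fin n → ℝ, B x y = ω₀ x y := by
    intro x y; rw [hω₀, hBmk]
  have halt : B.IsAlt := by
    intro x
    rw [hBmk]
    apply Finset.sum_eq_zero; intro j _; ring
  have hrefl : B.IsRefl := halt.isRefl
  -- nondegeneracy
  have hsepL : ∀ x : Fin n ⊕ Fin n → ℝ, (∀ y, B x y = 0) → x = 0 := by
    intro x hx
    funext i
    cases i with
    | inl j =>
      have h := hx (Pi.single (Sum.inr j) (1:ℝ))
      rw [hBmk, Finset.sum_eq_single j] at h
      · simpa using h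
      · intro k _ hk; simp [Pi.single_apply, hk.symm]
      · simp
    | inr j =>
      have h := hx (Pi.single (Sum.inl j) (1:ℝ))
      rw [hBmk, Finset.sum_eq_single j] at h
      · simp at h; simpa using h
      · intro k _ hk; simp [Pi.single_apply, hk.symm]
      · simp

  have hnd : B.Nondegenerate := ⟨hsepL, fun y hy => hsepL y (fun x => hrefl _ _ (hy x))⟩
  -- linear maps
  set A := (Φ - 1).mulVecLin with hA
  set Y := X.mulVecLin with hY
  set P := Φ.mulVecLin with hP
  have hAx : ∀ x : Fin n ⊕ Fin n → ℝ, A x = P x - x := by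
    intro x; simp [hA, hP, Matrix.sub_mulVec, Matrix.mulVecLin_apply]
  -- Φ preserves B
  have hPB : ∀ x y, B (P x) (P y) = B x y := by
    intro x y; rw [hB, hB]; exact hΦ x y
  -- X is infinitesimally symplectic: B (Y x) y = - B x (Y y)
  have hYB : ∀ x y, B (Y x) y + B x (Y y) = 0 := by
    intro x y
    have key : ∀ t : ℝ, t * (B (Y x) y + B x (Y y)) + t^2 * B (Y x) (Y y) = 0 := by
      intro t
      have h := hX t x y
      rw [← hB, ← hB] at h
      have hm : ∀ z : Fin n ⊕ Fin n → ℝ, (1 + t • X).mulVec z = z + t • (Y z) := by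
        intro z
        simp [Matrix.add_mulVec, Matrix.smul_mulVec, hY, Matrix.mulVecLin_apply]
      rw [hm, hm] at h
      have hexp : B (x + t • Y x) (y + t • Y y)
          = B x y + (t * (B (Y x) y + B x (Y y)) + t^2 * B (Y x) (Y y)) := by
        simp only [map_add, map_smul, LinearMap.add_apply, LinearMap.smul_apply, smul_eq_mul]
        ring
      rw [hexp] at h
      linarith [h]
    have h1 := key 1
    have h2 := key (-1)
    nlinarith [h1, h2]
  -- Φ is bijective
  have hPinj : Function.Injective P := by
    rw [← LinearMap.ker_eq_bot]
    rw [Submodule.eq_bot_iff]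
    intro x hx
    apply hsepL
    intro y
    rw [← hPB x y, LinearMap.mem_ker.mp hx, map_zero]
    simp
  have hPsurj : Function.Surjective P :=
    (LinearMap.injective_iff_surjective).mp hPinj
  -- orthogonal of range A is ker A
  have horthA : B.orthogonal (LinearMap.range A) = LinearMap.ker A := by
    ext y
    rw [LinearMap.BilinForm.mem_orthogonal_iff, LinearMap.mem_ker]
    constructor
    · intro h
      have h2 : ∀ z : Fin n ⊕ Fin n → ℝ, B z (A y) = 0 := by
        intro z
        obtain ⟨x, hx⟩ := hPsurj z
        have := h (A x) ⟨x, rfl⟩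
        rw [hAx x] at this
        rw [map_sub, LinearMap.sub_apply] at this
        -- B (P x) y - B x y = 0, i.e. B (P x) y = B (P x) (P y)
        have h3 : B (P x) y = B (P x) (P y) := by
          rw [hPB]; linarith [this]
        rw [← hx, hAx y, map_sub, h3]
        ring
      have : A y = 0 := hsepL (A y) (fun z => hrefl _ _ (h2 z))
      exact this
    · intro h w hw
      obtain ⟨x, rfl⟩ := hw
      have hy : P y = y := by
        have h2 : P y - y = 0 := by rw [← hAx y, h]
        exact sub_eq_zero.mp h2
      rw [hAx x, map_sub, LinearMap.sub_apply, ← hPB x y, hy]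
      ring
  -- orthogonal of range Y is ker Y
  have horthY : B.orthogonal (LinearMap.range Y) = LinearMap.ker Y := by
    ext y
    rw [LinearMap.BilinForm.mem_orthogonal_iff, LinearMap.mem_ker]
    constructor
    · intro h
      apply hsepL
      intro z
      have := h (Y z) ⟨z, rfl⟩
      have h2 : B z (Y y) = 0 := by linarith [hYB z y, this]
      exact hrefl _ _ h2
    · intro h w hw
      obtain ⟨x, rfl⟩ := hw
      have := hYB x y
      rw [h] at this
      simpa using this
  -- kernels span everything
  have hker_sup : LinearMap.ker A ⊔ LinearMap.ker Y = ⊤ := by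
    have horth_sup : B.orthogonal (LinearMap.ker A ⊔ LinearMap.ker Y) = ⊥ := by
      rw [Submodule.eq_bot_iff]
      intro x hx
      have hxA : x ∈ B.orthogonal (LinearMap.ker A) := by
        rw [LinearMap.BilinForm.mem_orthogonal_iff] at hx ⊢
        intro m hm
        exact hx m (Submodule.mem_sup_left hm)
      have hxY : x ∈ B.orthogonal (LinearMap.ker Y) := by
        rw [LinearMap.BilinForm.mem_orthogonal_iff] at hx ⊢
        intro m hm
        exact hx m (Submodule.mem_sup_right hm)
      rw [← horthA, B.orthogonal_orthogonal hnd hrefl] at hxA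
      rw [← horthY, B.orthogonal_orthogonal hnd hrefl] at hxY
      have : x ∈ LinearMap.range A ⊓ LinearMap.range Y := ⟨hxA, hxY⟩
      rwa [hinter] at this
    have := congrArg (B.orthogonal) horth_sup
    rw [B.orthogonal_orthogonal hnd hrefl] at this
    rw [this]
    rw [Submodule.eq_top_iff']
    intro x
    rw [LinearMap.BilinForm.mem_orthogonal_iff]
    intro m hm
    rw [Submodule.mem_bot] at hm
    rw [hm]
    exact LinearMap.BilinForm.isOrtho_zero_left x
  -- the perturbed matrix
  have hC : (Φ * (1 + X) - 1).mulVecLin = A + Y := by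
    have : Φ * (1 + X) - 1 = (Φ - 1) + X := by
      rw [mul_add, mul_one, hΦX, add_sub_right_comm]
    rw [this, Matrix.mulVecLin_add]
  have hkerC : LinearMap.ker (A + Y) = LinearMap.ker A ⊓ LinearMap.ker Y := by
    ext x
    simp only [LinearMap.mem_ker, Submodule.mem_inf, LinearMap.add_apply]
    constructor
    · intro h
      have h1 : A x = Y (-x) := by rw [map_neg, eq_neg_iff_add_eq_zero]; exact h
      have h2 : A x ∈ LinearMap.range A ⊓ LinearMap.range Y :=
        ⟨⟨x, rfl⟩, ⟨-x, h1.symm⟩⟩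
      rw [hinter, Submodule.mem_bot] at h2
      constructor
      · exact h2
      · rw [h2, zero_add] at h; exact h
    · intro ⟨h1, h2⟩
      rw [h1, h2, add_zero]
  -- dimension counting
  have hrn1 : Module.finrank ℝ (LinearMap.range A) + Module.finrank ℝ (LinearMap.ker A) = Module.finrank ℝ (Fin n ⊕ Fin n → ℝ) :=
    LinearMap.finrank_range_add_finrank_ker A
  have hrn2 : Module.finrank ℝ (LinearMap.range Y) + Module.finrank ℝ (LinearMap.ker Y) = Module.finrank ℝ (Fin n ⊕ Fin n → ℝ) :=
    LinearMap.finrank_range_add_finrank_ker Y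
  have hrn3 : Module.finrank ℝ (LinearMap.range (A + Y)) + Module.finrank ℝ (LinearMap.ker (A + Y))
      = Module.finrank ℝ (Fin n ⊕ Fin n → ℝ) := LinearMap.finrank_range_add_finrank_ker (A + Y)
  have hsupinf : Module.finrank ℝ (LinearMap.ker A ⊔ LinearMap.ker Y : Submodule ℝ (Fin n ⊕ Fin n → ℝ))
      + Module.finrank ℝ (LinearMap.ker A ⊓ LinearMap.ker Y : Submodule ℝ (Fin n ⊕ Fin n → ℝ))
      = Module.finrank ℝ (LinearMap.ker A) + Module.finrank ℝ (LinearMap.ker Y) :=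
    Submodule.finrank_sup_add_finrank_inf_eq _ _
  rw [hker_sup, finrank_top] at hsupinf
  rw [hkerC] at hrn3
  show Module.finrank ℝ (LinearMap.range (Φ * (1 + X) - 1).mulVecLin)
      = Module.finrank ℝ (LinearMap.range A) + Module.finrank ℝ (LinearMap.range Y)
  rw [hC]
  omega
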